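/- Let f : X → ℝ be locally Lipschitz continuous, let h_k → h in X, and let A_k, A ⊂ X be nonempty with A compact and A_k → A in the Hausdorff metric, i.e. d(A_k,A) := inf{δ > 0 : A ⊂ B_δ(A_k) and A_k ⊂ B_δ(A)} → 0 as k → ∞. Then limsup_{k→∞} f⁰(A_k;h_k) ≤ f⁰(A;h). -/

import Mathlib

open Filter Metric Set NormedSpace
open scoped NNReal Topology
set_option maxHeartbeats 800000

variable {X : Type*} [NormedAddCommGroup X] [NormedSpace ℝ X]

/-- Clarke's generalized directional derivative
`f⁰(x;h) = limsup_{y→x, t↓0⁺} (f(y+th) − f(y))/t`. -/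
noncomputable def clarkeDeriv (f : X → ℝ) (x : X) (h : X) : ℝ :=
  Filter.limsup (fun p : X × ℝ => (f (p.1 + p.2 • h) - f p.1) / p.2)
    ((nhds x) ×ˢ (nhdsWithin 0 (Set.Ioi 0)))

/-- Clarke's generalized gradient `∂f(x) = {a ∈ X* : ⟨a,h⟩ ≤ f⁰(x;h) ∀ h}`. -/
def clarkeGrad (f : X → ℝ) (x : X) : Set (StrongDual ℝ X) :=
  {a | ∀ h : X, a h ≤ clarkeDeriv f x h}

/-- Directional derivative of `f` on the set `A`: `f⁰(A;h) = sup_{y∈A} f⁰(y;h)`. -/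
noncomputable def setDeriv (f : X → ℝ) (A : Set X) (h : X) : ℝ :=
  sSup ((fun y => clarkeDeriv f y h) '' A)

/-- Gradient of `f` on the set `A`: the weak*-closed convex hull of `⋃_{y∈A} ∂f(y)`. -/
def setGrad (f : X → ℝ) (A : Set X) : Set (StrongDual ℝ X) :=
  {a | StrongDual.toWeakDual a ∈
    closure ((StrongDual.toWeakDual (𝕜 := ℝ) (E := X)) '' (convexHull ℝ (⋃ y ∈ A, clarkeGrad f y)))}

private lemma quotient_abs_bound {f : X → ℝ} {K : ℝ≥0} {x : X} {r : ℝ}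
    (hr : 0 < r) (hK : LipschitzOnWith K f (ball x r)) {z : X}
    (hz : dist z x < r / 2) (h' : X) :
    ∀ᶠ p in ((𝓝 z) ×ˢ (𝓝[>] (0:ℝ))),
      |(f (p.1 + p.2 • h') - f p.1) / p.2| ≤ (K : ℝ) * ‖h'‖ := by
  have hzb : z ∈ ball x (r/2) := mem_ball.mpr hz
  have e1 : ∀ᶠ y in 𝓝 z, y ∈ ball x (r/2) := isOpen_ball.eventually_mem hzb
  have hc : (0:ℝ) < (r/2) / (‖h'‖ + 1) := by positivity
  have e3 : ∀ᶠ t in 𝓝[>] (0:ℝ), t < (r/2)/(‖h'‖+1) := by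
    apply Filter.Eventually.filter_mono nhdsWithin_le_nhds
    filter_upwards [Iio_mem_nhds hc] with t ht
    exact ht
  have e2 : ∀ᶠ t in 𝓝[>] (0:ℝ), t ∈ Ioi (0:ℝ) := eventually_mem_nhdsWithin
  filter_upwards [(e1.prod_inl (𝓝[>] (0:ℝ))).and ((e2.and e3).prod_inr (𝓝 z))]
    with p hp
  obtain ⟨hy, ht0, htc⟩ := hp
  have ht0' : (0:ℝ) < p.2 := ht0
  have hth : p.2 * ‖h'‖ < r/2 := by
    have h1 : p.2 * ‖h'‖ ≤ p.2 * (‖h'‖+1) :=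
      mul_le_mul_of_nonneg_left (by linarith) ht0'.le
    have h2 : p.2 * (‖h'‖+1) < ((r/2)/(‖h'‖+1)) * (‖h'‖+1) := by
      apply mul_lt_mul_of_pos_right htc; positivity
    have h3 : ((r/2)/(‖h'‖+1)) * (‖h'‖+1) = r/2 := by
      field_simp
    linarith
  have hyx : dist p.1 x < r/2 := mem_ball.mp hy
  have hy' : p.1 ∈ ball x r := mem_ball.mpr (by linarith)
  have hsm : ‖p.2 • h'‖ = p.2 * ‖h'‖ := by
    rw [norm_smul, Real.norm_of_nonneg ht0'.le]
  have hyt : p.1 + p.2 • h' ∈ ball x r := by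
    rw [mem_ball, dist_eq_norm]
    have heq : p.1 + p.2 • h' - x = (p.1 - x) + p.2 • h' := by abel
    have h4 : ‖p.1 + p.2 • h' - x‖ ≤ ‖p.1 - x‖ + ‖p.2 • h'‖ := by
      rw [heq]; exact norm_add_le _ _
    have h5 : ‖p.1 - x‖ < r/2 := by rw [← dist_eq_norm]; exact hyx
    rw [hsm] at h4
    linarith
  have hd := hK.dist_le_mul _ hyt _ hy'
  have hdist : dist (p.1 + p.2 • h') p.1 = p.2 * ‖h'‖ := by
    rw [dist_eq_norm]
    simpa using hsm
  rw [Real.dist_eq, hdist] at hd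
  rw [abs_div, abs_of_pos ht0', div_le_iff₀ ht0']
  calc |f (p.1 + p.2 • h') - f p.1| ≤ (K:ℝ) * (p.2 * ‖h'‖) := hd
    _ = (K:ℝ) * ‖h'‖ * p.2 := by ring

private lemma key_lemma (f : X → ℝ) (hf : LocallyLipschitz f) (h₀ : X) {ε : ℝ}
    (hε : 0 < ε) (x : X) :
    ∃ δ > 0, ∃ C : ℝ, ∀ z h', dist z x < δ → dist h' h₀ < δ →
      clarkeDeriv f z h' ≤ clarkeDeriv f x h₀ + ε ∧ C ≤ clarkeDeriv f z h' := by
  obtain ⟨K, t, htm, hKt⟩ := hf x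
  obtain ⟨r, hr, hball⟩ := Metric.mem_nhds_iff.mp htm
  have hK : LipschitzOnWith K f (ball x r) := hKt.mono hball
  have qbx := quotient_abs_bound hr hK (z := x) (by simpa using half_pos hr) h₀
  have bddx : IsBoundedUnder (· ≤ ·) ((𝓝 x) ×ˢ (𝓝[>] (0:ℝ)))
      (fun p : X × ℝ => (f (p.1 + p.2 • h₀) - f p.1) / p.2) :=
    ⟨(K:ℝ) * ‖h₀‖, eventually_map.mpr (qbx.mono fun p hp => (le_abs_self _).trans hp)⟩
  have hlt : Filter.limsup (fun p : X × ℝ => (f (p.1 + p.2 • h₀) - f p.1) / p.2)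
      ((𝓝 x) ×ˢ (𝓝[>] (0:ℝ))) < clarkeDeriv f x h₀ + ε/2 := by
    unfold clarkeDeriv; linarith
  have hev := eventually_lt_of_limsup_lt hlt bddx
  rw [eventually_prod_iff] at hev
  obtain ⟨pa, hpa, pb, hpb, H⟩ := hev
  obtain ⟨ρ, hρ, hρa⟩ := Metric.eventually_nhds_iff_ball.mp hpa
  set δ : ℝ := min (min (ρ/2) (r/4)) (min 1 (ε/(2*((K:ℝ)+1)))) with hδdef
  have hδpos : 0 < δ := by
    have : (0:ℝ) < ε/(2*((K:ℝ)+1)) := by positivity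
    simp only [hδdef, lt_min_iff]
    refine ⟨⟨by linarith, by linarith⟩, ⟨one_pos, this⟩⟩
  have hδρ : δ ≤ ρ/2 := (min_le_left _ _).trans (min_le_left _ _)
  have hδr : δ ≤ r/4 := (min_le_left _ _).trans (min_le_right _ _)
  have hδ1 : δ ≤ 1 := (min_le_right _ _).trans (min_le_left _ _)
  have hδε : δ ≤ ε/(2*((K:ℝ)+1)) := (min_le_right _ _).trans (min_le_right _ _)
  refine ⟨δ, hδpos, -((K:ℝ)*(‖h₀‖+1)), ?_⟩
  intro z h' hz hh'
  have hzr : dist z x < r/2 := by linarith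
  have qbz := quotient_abs_bound hr hK hzr h'
  have bddz : IsBoundedUnder (· ≤ ·) ((𝓝 z) ×ˢ (𝓝[>] (0:ℝ)))
      (fun p : X × ℝ => (f (p.1 + p.2 • h') - f p.1) / p.2) :=
    ⟨(K:ℝ) * ‖h'‖, eventually_map.mpr (qbz.mono fun p hp => (le_abs_self _).trans hp)⟩
  have cobdd : IsCoboundedUnder (· ≤ ·) ((𝓝 z) ×ˢ (𝓝[>] (0:ℝ)))
      (fun p : X × ℝ => (f (p.1 + p.2 • h') - f p.1) / p.2) :=
    isCoboundedUnder_le_of_eventually_le _ (x := -((K:ℝ)*‖h'‖))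
      (qbz.mono fun p hp => (abs_le.mp hp).1)
  have hh'n : ‖h'‖ ≤ ‖h₀‖ + 1 := by
    have h1 : ‖h'‖ ≤ ‖h₀‖ + ‖h' - h₀‖ := by
      have := norm_add_le (h' - h₀) h₀
      simpa [add_comm] using this
    have h2 : ‖h' - h₀‖ < δ := by rw [← dist_eq_norm]; exact hh'
    linarith
  constructor
  · -- upper bound
    apply limsup_le_of_le cobdd
    have ey1 : ∀ᶠ y in 𝓝 z, y ∈ ball x ρ :=
      isOpen_ball.eventually_mem (mem_ball.mpr (by linarith))
    have ey2 : ∀ᶠ y in 𝓝 z, y ∈ ball x (r/2) :=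
      isOpen_ball.eventually_mem (mem_ball.mpr hzr)
    have hc2 : (0:ℝ) < (r/2)/(‖h₀‖ + ‖h'‖ + 1) := by positivity
    have et3 : ∀ᶠ s in 𝓝[>] (0:ℝ), s < (r/2)/(‖h₀‖ + ‖h'‖ + 1) := by
      apply Filter.Eventually.filter_mono nhdsWithin_le_nhds
      filter_upwards [Iio_mem_nhds hc2] with s hs
      exact hs
    have et2 : ∀ᶠ s in 𝓝[>] (0:ℝ), s ∈ Ioi (0:ℝ) := eventually_mem_nhdsWithin
    filter_upwards [((ey1.and ey2).prod_inl (𝓝[>] (0:ℝ))).and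
      ((hpb.and (et2.and et3)).prod_inr (𝓝 z))] with p hp
    obtain ⟨⟨hyρ, hyr⟩, hpbt, ht0, htc⟩ := hp
    have ht0' : (0:ℝ) < p.2 := ht0
    have hq0 : (f (p.1 + p.2 • h₀) - f p.1) / p.2 < clarkeDeriv f x h₀ + ε/2 :=
      H (hρa p.1 hyρ) hpbt
    -- memberships
    have hyx : dist p.1 x < r/2 := mem_ball.mp hyr
    have hmem : ∀ g : X, ‖g‖ ≤ ‖h₀‖ + ‖h'‖ → p.1 + p.2 • g ∈ ball x r := by
      intro g hg
      have hsm : ‖p.2 • g‖ = p.2 * ‖g‖ := by rw [norm_smul, Real.norm_of_nonneg ht0'.le]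
      rw [mem_ball, dist_eq_norm]
      have heq : p.1 + p.2 • g - x = (p.1 - x) + p.2 • g := by abel
      have h4 : ‖p.1 + p.2 • g - x‖ ≤ ‖p.1 - x‖ + ‖p.2 • g‖ := by
        rw [heq]; exact norm_add_le _ _
      have h5 : ‖p.1 - x‖ < r/2 := by rw [← dist_eq_norm]; exact hyx
      have h6 : p.2 * ‖g‖ < r/2 := by
        have h7 : p.2 * ‖g‖ ≤ p.2 * (‖h₀‖ + ‖h'‖ + 1) :=
          mul_le_mul_of_nonneg_left (by linarith) ht0'.le
        have h8 : p.2 * (‖h₀‖ + ‖h'‖ + 1) < ((r/2)/(‖h₀‖ + ‖h'‖ + 1)) * (‖h₀‖ + ‖h'‖ + 1) := by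
          apply mul_lt_mul_of_pos_right htc; positivity
        have h9 : ((r/2)/(‖h₀‖ + ‖h'‖ + 1)) * (‖h₀‖ + ‖h'‖ + 1) = r/2 := by
          field_simp
        linarith
      rw [hsm] at h4
      linarith
    have hm1 : p.1 + p.2 • h' ∈ ball x r :=
      hmem h' (by linarith [norm_nonneg h₀])
    have hm0 : p.1 + p.2 • h₀ ∈ ball x r :=
      hmem h₀ (by linarith [norm_nonneg h'])
    have hd := hK.dist_le_mul _ hm1 _ hm0
    have hdist : dist (p.1 + p.2 • h') (p.1 + p.2 • h₀) = p.2 * ‖h' - h₀‖ := by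
      rw [dist_eq_norm]
      have heq : p.1 + p.2 • h' - (p.1 + p.2 • h₀) = p.2 • (h' - h₀) := by
        rw [smul_sub]; abel
      rw [heq, norm_smul, Real.norm_of_nonneg ht0'.le]
    rw [Real.dist_eq, hdist] at hd
    have hd1 : f (p.1 + p.2 • h') - f (p.1 + p.2 • h₀) ≤ (K:ℝ) * (p.2 * ‖h' - h₀‖) :=
      (le_abs_self _).trans hd
    have hsplit : (f (p.1 + p.2 • h') - f p.1) / p.2
        = (f (p.1 + p.2 • h') - f (p.1 + p.2 • h₀)) / p.2
          + (f (p.1 + p.2 • h₀) - f p.1) / p.2 := by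
      field_simp
      ring
    have hd2 : (f (p.1 + p.2 • h') - f (p.1 + p.2 • h₀)) / p.2 ≤ (K:ℝ) * ‖h' - h₀‖ := by
      rw [div_le_iff₀ ht0']
      calc f (p.1 + p.2 • h') - f (p.1 + p.2 • h₀) ≤ (K:ℝ) * (p.2 * ‖h' - h₀‖) := hd1
        _ = (K:ℝ) * ‖h' - h₀‖ * p.2 := by ring
    have hKd : (K:ℝ) * ‖h' - h₀‖ ≤ ε/2 := by
      have h2 : ‖h' - h₀‖ < δ := by rw [← dist_eq_norm]; exact hh'
      have hK0 : (0:ℝ) ≤ K := K.coe_nonneg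
      have h3 : (K:ℝ) * ‖h' - h₀‖ ≤ (K:ℝ) * δ := mul_le_mul_of_nonneg_left h2.le hK0
      have h4 : (K:ℝ) * δ ≤ (K:ℝ) * (ε/(2*((K:ℝ)+1))) := mul_le_mul_of_nonneg_left hδε hK0
      have h5 : (K:ℝ) * (ε/(2*((K:ℝ)+1))) ≤ ε/2 := by
        rw [← mul_div_assoc, div_le_div_iff₀ (by positivity) (by norm_num : (0:ℝ) < 2)]
        nlinarith
      linarith
    rw [hsplit]
    linarith
  · -- lower bound
    have hfreq : ∃ᶠ p in ((𝓝 z) ×ˢ (𝓝[>] (0:ℝ))),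
        -((K:ℝ)*‖h'‖) ≤ (f (p.1 + p.2 • h') - f p.1) / p.2 :=
      (qbz.mono fun p hp => (abs_le.mp hp).1).frequently
    have hle : -((K:ℝ)*‖h'‖) ≤ clarkeDeriv f z h' :=
      le_limsup_of_frequently_le hfreq bddz
    have hK0 : (0:ℝ) ≤ K := K.coe_nonneg
    have h6 : -((K:ℝ)*(‖h₀‖+1)) ≤ -((K:ℝ)*‖h'‖) :=
      neg_le_neg (mul_le_mul_of_nonneg_left hh'n hK0)
    exact h6.trans hle

/-- Proposition 2.2 (upper semicontinuity), inequality (5):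
`limsup_k f⁰(A_k;h_k) ≤ f⁰(A;h)`. -/
theorem limsup_setDeriv_le_of_hausdorff_tendsto
    [CompleteSpace X] (f : X → ℝ) (hf : LocallyLipschitz f)
    (h : ℕ → X) (h₀ : X) (hh : Tendsto h atTop (nhds h₀))
    (A : ℕ → Set X) (A₀ : Set X) (hne : ∀ k, (A k).Nonempty) (hA₀ : A₀.Nonempty)
    (hcomp : IsCompact A₀)
    (hconv : ∀ ε : ℝ, 0 < ε → ∀ᶠ k in atTop,
      A₀ ⊆ Metric.thickening ε (A k) ∧ A k ⊆ Metric.thickening ε A₀) :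
    Filter.limsup (fun k => setDeriv f (A k) (h k)) atTop ≤ setDeriv f A₀ h₀ := by
  set M := setDeriv f A₀ h₀ with hM
  have key' : ∀ ε : ℝ, 0 < ε → ∃ C : ℝ, ∀ᶠ k in atTop,
      C ≤ setDeriv f (A k) (h k) ∧ setDeriv f (A k) (h k) ≤ M + ε := by
    intro ε hε
    choose δ hδpos C hkey using fun x => key_lemma f hf h₀ hε x
    obtain ⟨b', hb'A, hb'fin, hcover⟩ := hcomp.elim_finite_subcover_image
      (fun x _ => isOpen_ball (x := x) (ε := δ x / 2))
      (fun y hy => mem_iUnion₂.mpr ⟨y, hy, mem_ball_self (half_pos (hδpos y))⟩)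
    have hsne : hb'fin.toFinset.Nonempty := by
      rw [Set.Finite.toFinset_nonempty]
      obtain ⟨y, hy⟩ := hA₀
      obtain ⟨x, hx, _⟩ := mem_iUnion₂.mp (hcover hy)
      exact ⟨x, hx⟩
    set s := hb'fin.toFinset with hs
    set δ' : ℝ := s.inf' hsne (fun x => δ x / 2) with hδ'
    have hδ'pos : 0 < δ' :=
      (Finset.lt_inf'_iff hsne).mpr fun x _ => half_pos (hδpos x)
    have hδ'le : ∀ x ∈ s, δ' ≤ δ x / 2 := fun x hx => Finset.inf'_le _ hx
    -- bounded above on A₀, hence each clarkeDeriv f x h₀ ≤ M for x ∈ b'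
    have hbddA₀ : BddAbove ((fun y => clarkeDeriv f y h₀) '' A₀) := by
      refine ⟨s.sup' hsne (fun y => clarkeDeriv f y h₀) + ε, ?_⟩
      rintro _ ⟨y, hy, rfl⟩
      obtain ⟨x, hx, hyx⟩ := mem_iUnion₂.mp (hcover hy)
      have hxs : x ∈ s := hb'fin.mem_toFinset.mpr hx
      have hd1 : dist y x < δ x := (mem_ball.mp hyx).trans_le (by linarith [hδpos x])
      have hd2 : dist h₀ h₀ < δ x := by simpa using hδpos x
      have h1 := (hkey x y h₀ hd1 hd2).1
      have h2 : clarkeDeriv f x h₀ ≤ s.sup' hsne (fun y => clarkeDeriv f y h₀) :=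
        Finset.le_sup' (fun y => clarkeDeriv f y h₀) hxs
      linarith
    have hMx : ∀ x ∈ b', clarkeDeriv f x h₀ ≤ M :=
      fun x hx => le_csSup hbddA₀ ⟨x, hb'A hx, rfl⟩
    set C' : ℝ := s.inf' hsne C with hC'
    have main : ∀ z ∈ thickening δ' A₀, ∀ h', dist h' h₀ < δ' →
        C' ≤ clarkeDeriv f z h' ∧ clarkeDeriv f z h' ≤ M + ε := by
      intro z hz h' hh'
      obtain ⟨a, haA, hza⟩ := mem_thickening_iff.mp hz
      obtain ⟨x, hx, hax⟩ := mem_iUnion₂.mp (hcover haA)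
      have hxs : x ∈ s := hb'fin.mem_toFinset.mpr hx
      have hδx : δ' ≤ δ x / 2 := hδ'le x hxs
      have hzx : dist z x < δ x := by
        have h1 : dist a x < δ x / 2 := mem_ball.mp hax
        calc dist z x ≤ dist z a + dist a x := dist_triangle _ _ _
          _ < δ' + δ x / 2 := by linarith
          _ ≤ δ x := by linarith
      have hh'x : dist h' h₀ < δ x := hh'.trans_le (hδx.trans (by linarith [hδpos x]))
      obtain ⟨hu, hl⟩ := hkey x z h' hzx hh'x
      exact ⟨(Finset.inf'_le C hxs).trans hl, hu.trans (by linarith [hMx x hx])⟩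
    refine ⟨C', ?_⟩
    filter_upwards [hconv δ' hδ'pos, hh (ball_mem_nhds h₀ hδ'pos)] with k hk hhk
    obtain ⟨_, hAk⟩ := hk
    have hhk' : dist (h k) h₀ < δ' := mem_ball.mp hhk
    have hub : ∀ w ∈ A k, clarkeDeriv f w (h k) ≤ M + ε :=
      fun w hw => (main w (hAk hw) _ hhk').2
    constructor
    · obtain ⟨z, hz⟩ := hne k
      have hb : BddAbove ((fun y => clarkeDeriv f y (h k)) '' (A k)) :=
        ⟨M + ε, by rintro _ ⟨w, hw, rfl⟩; exact hub w hw⟩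
      exact ((main z (hAk hz) _ hhk').1).trans (le_csSup hb ⟨z, hz, rfl⟩)
    · exact csSup_le ((hne k).image _) (by rintro _ ⟨w, hw, rfl⟩; exact hub w hw)
  have cobdd : IsCoboundedUnder (· ≤ ·) atTop (fun k => setDeriv f (A k) (h k)) := by
    obtain ⟨C, hC⟩ := key' 1 one_pos
    exact isCoboundedUnder_le_of_eventually_le _ (hC.mono fun k hk => hk.1)
  refine le_of_forall_pos_le_add fun ε hε => ?_
  obtain ⟨C, hC⟩ := key' ε hε
  exact limsup_le_of_le cobdd (hC.mono fun k hk => hk.2)
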